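/- Let s ∈ ℝ with s > 2 and define B(s;x) = Re F*(s;x), where F*(s;x) = 2·Γ(s+1)/(2π)^s · e^{−iπs/2} · ∑_{k=1}^∞ e^{2πikx}/k^s. Then for every x ∈ ℝ, the function y ↦ B(s;y) has derivative s·B(s−1;x) at x; that is, ∂ₓB(s;x) = s·B(s−1;x). (This is the B-side umbral ladder.) -/

import Mathlib

open Real Complex

/-- The polylogarithm on the unit circle: `Li_s(e^{2πix}) = ∑_{k=1}^∞ e^{2πikx}/k^s`. -/
noncomputable def liCircle (s : ℂ) (x : ℝ) : ℂ :=
  ∑' k : ℕ+, Complex.exp (2 * Real.pi * Complex.I * k * x) / (k : ℂ) ^ s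

/-- The master function `F*(s;x) = 2·Γ(s+1)/(2π)^s · e^{−iπs/2} · Li_s(e^{2πix})`. -/
noncomputable def Fstar (s : ℂ) (x : ℝ) : ℂ :=
  2 * Complex.Gamma (s + 1) / (2 * Real.pi : ℂ) ^ s *
    Complex.exp (-Real.pi * Complex.I * s / 2) * liCircle s x

/-- The analytic Bernoulli function `B(s;x) = Re F*(s;x)` for real `s`. -/
noncomputable def analyticB (s : ℝ) (x : ℝ) : ℝ := (Fstar s x).re

lemma term_norm (s : ℝ) (k : ℕ+) (x : ℝ) :
    ‖Complex.exp (2 * Real.pi * Complex.I * k * x) / (k : ℂ) ^ (s : ℂ)‖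
      = 1 / (k : ℝ) ^ s := by
  rw [norm_div]
  have h1 : ‖Complex.exp (2 * Real.pi * Complex.I * k * x)‖ = 1 := by
    rw [Complex.norm_exp]
    have h0 : (2 * Real.pi * Complex.I * k * x).re = 0 := by simp
    rw [h0, Real.exp_zero]
  have h2 : ‖(k : ℂ) ^ (s : ℂ)‖ = (k : ℝ) ^ s := by
    have hk : (0 : ℝ) < (k : ℝ) := by exact_mod_cast k.pos
    rw [show ((k : ℕ+) : ℂ) = ((k : ℝ) : ℂ) by push_cast; ring]
    rw [Complex.norm_cpow_eq_rpow_re_of_pos hk]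
    simp
  rw [h1, h2]

lemma pnat_summable (p : ℝ) (hp : 1 < p) :
    Summable (fun k : ℕ+ => 1 / (k : ℝ) ^ p) := by
  have h : Summable (fun n : ℕ => 1 / (n : ℝ) ^ p) :=
    (Real.summable_one_div_nat_rpow).mpr hp
  exact h.comp_injective (fun a b h => by
    exact_mod_cast PNat.coe_injective (by exact_mod_cast h))

lemma liCircle_hasDerivAt (s : ℝ) (hs : 2 < s) (x : ℝ) :
    HasDerivAt (fun y : ℝ => liCircle (s : ℂ) y)
      (2 * Real.pi * Complex.I * liCircle ((s : ℂ) - 1) x) x := by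
  set c : ℕ+ → ℂ := fun k => 2 * Real.pi * Complex.I * k with hc
  set g : ℕ+ → ℝ → ℂ := fun k y => Complex.exp (c k * y) / (k : ℂ) ^ (s : ℂ) with hg
  set g' : ℕ+ → ℝ → ℂ := fun k y => c k * Complex.exp (c k * y) / (k : ℂ) ^ (s : ℂ) with hg'
  set u : ℕ+ → ℝ := fun k => 2 * Real.pi * (1 / (k : ℝ) ^ (s - 1)) with hu
  have hu_sum : Summable u := (pnat_summable (s - 1) (by linarith)).mul_left _
  have hderiv : ∀ k : ℕ+, ∀ y : ℝ, HasDerivAt (g k) (g' k y) y := by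
    intro k y
    have h1 : HasDerivAt (fun z : ℂ => Complex.exp (c k * z))
        (c k * Complex.exp (c k * y)) y := by
      simpa [mul_comm] using ((hasDerivAt_id (y : ℂ)).const_mul (c k)).cexp
    exact (h1.comp_ofReal).div_const _
  have hbound : ∀ k : ℕ+, ∀ y : ℝ, ‖g' k y‖ ≤ u k := by
    intro k y
    have hk : (0 : ℝ) < (k : ℝ) := by exact_mod_cast k.pos
    have hck : ‖c k‖ = 2 * Real.pi * (k : ℝ) := by
      rw [hc]
      simp [map_mul, Complex.norm_real, Complex.norm_natCast,
        _root_.abs_of_nonneg Real.pi_nonneg]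
    have hnorm : ‖g' k y‖ = 2 * Real.pi * (k : ℝ) * (1 / (k : ℝ) ^ s) := by
      rw [hg']
      simp only [mul_div_assoc]
      rw [norm_mul, term_norm s k y, hck]
    have hpow : (k : ℝ) ^ (s - 1) = (k : ℝ) ^ s / (k : ℝ) := by
      rw [Real.rpow_sub hk, Real.rpow_one]
    have hks : (0 : ℝ) < (k : ℝ) ^ s := Real.rpow_pos_of_pos hk _
    rw [hnorm, hu]
    simp only []
    rw [hpow, le_iff_eq_or_lt]
    left
    field_simp
  have hsum0 : Summable fun k => g k x := by
    apply Summable.of_norm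
    have h1 : ∀ k : ℕ+, ‖g k x‖ = 1 / (k : ℝ) ^ s := fun k => term_norm s k x
    rw [funext h1]
    exact pnat_summable s (by linarith)
  have H := hasDerivAt_tsum hu_sum hderiv hbound hsum0 x
  have key : (∑' k : ℕ+, g' k x) = 2 * Real.pi * Complex.I * liCircle ((s : ℂ) - 1) x := by
    rw [liCircle, ← tsum_mul_left]
    apply tsum_congr
    intro k
    have hk0 : ((k : ℕ) : ℂ) ≠ 0 := Nat.cast_ne_zero.mpr k.pos.ne'
    have hpow : ((k : ℕ) : ℂ) ^ (s : ℂ) = ((k : ℕ) : ℂ) ^ ((s : ℂ) - 1) * (k : ℕ) := by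
      have h := (Complex.cpow_add ((s : ℂ) - 1) 1 hk0).symm
      rw [Complex.cpow_one, show ((s : ℂ) - 1 + 1) = (s : ℂ) by ring] at h
      exact h.symm
    have h1 : ((k : ℕ) : ℂ) ^ ((s : ℂ) - 1) ≠ 0 := fun h =>
      hk0 ((Complex.cpow_eq_zero_iff _ _).mp h).1
    simp only [hg', hc, hpow]
    field_simp
  rw [key] at H
  exact H

/-- B-side umbral ladder: for real `s > 2`, `∂ₓ B(s;x) = s · B(s−1;x)`. -/
theorem analyticB_hasDerivAt (s : ℝ) (hs : 2 < s) (x : ℝ) :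
    HasDerivAt (fun y : ℝ => analyticB s y) (s * analyticB (s - 1) x) x := by
  have hs0 : (s : ℂ) ≠ 0 := by
    exact_mod_cast (by positivity : s ≠ 0)
  have h2pi : (2 * Real.pi : ℂ) ≠ 0 := by
    simp [Real.pi_ne_zero]
  set C : ℂ := 2 * Complex.Gamma ((s : ℂ) + 1) / (2 * Real.pi : ℂ) ^ (s : ℂ) *
      Complex.exp (-Real.pi * Complex.I * (s : ℂ) / 2) with hC
  have hF : HasDerivAt (fun y : ℝ => Fstar (s : ℂ) y)
      ((s : ℂ) * Fstar ((s : ℂ) - 1) x) x := by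
    have h := (liCircle_hasDerivAt s hs x).const_mul C
    have hfun : (fun y : ℝ => C * liCircle (s : ℂ) y) = fun y : ℝ => Fstar (s : ℂ) y := by
      funext y; rw [Fstar, hC]
    rw [hfun] at h
    have hconst : C * (2 * Real.pi * Complex.I * liCircle ((s : ℂ) - 1) x)
        = (s : ℂ) * Fstar ((s : ℂ) - 1) x := by
      rw [Fstar, hC]
      have hGamma : Complex.Gamma ((s : ℂ) + 1) = (s : ℂ) * Complex.Gamma (s : ℂ) :=
        Complex.Gamma_add_one _ hs0
      have hG2 : ((s : ℂ) - 1) + 1 = (s : ℂ) := by ring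
      have hpow : (2 * Real.pi : ℂ) ^ (s : ℂ)
          = (2 * Real.pi : ℂ) ^ ((s : ℂ) - 1) * (2 * Real.pi : ℂ) := by
        have h := (Complex.cpow_add ((s : ℂ) - 1) 1 h2pi).symm
        rw [Complex.cpow_one, show ((s : ℂ) - 1 + 1) = (s : ℂ) by ring] at h
        exact h.symm
      have hexp : Complex.exp (-Real.pi * Complex.I * (s : ℂ) / 2)
          = Complex.exp (-Real.pi * Complex.I * ((s : ℂ) - 1) / 2) * (-Complex.I) := by
        have hI : Complex.exp (-(Real.pi / 2 : ℝ) * Complex.I) = -Complex.I := by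
          rw [Complex.exp_mul_I]
          push_cast
          rw [Complex.cos_neg, Complex.sin_neg]
          simp [Complex.cos_pi_div_two, Complex.sin_pi_div_two]
        rw [← hI, ← Complex.exp_add]
        congr 1
        push_cast
        ring
      have hpne : (2 * Real.pi : ℂ) ^ ((s : ℂ) - 1) ≠ 0 := fun h =>
        h2pi ((Complex.cpow_eq_zero_iff _ _).mp h).1
      rw [hG2, hGamma, hpow, hexp]
      field_simp
      ring_nf
      rw [Complex.I_sq]
      ring
    rw [hconst] at h
    exact h
  have hre := Complex.reCLM.hasFDerivAt.comp_hasDerivAt x hF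
  have hfinal : Complex.reCLM ((s : ℂ) * Fstar ((s : ℂ) - 1) x)
      = s * analyticB (s - 1) x := by
    simp only [Complex.reCLM_apply, analyticB]
    rw [Complex.re_ofReal_mul]
    congr 2
    push_cast
    ring
  rw [hfinal] at hre
  exact hre
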